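/- For every FU k and every fixed opponent power vector p_{-k} with nonnegative entries, the set of maximizers of p_k ↦ u_k(p_k, p_{-k}) over the compact interval [0, p_k^max] is a singleton; that is, the best response p̂_k(p_{-k}) exists and is unique (single-valued). (Part of Lemma 1.) -/

import Mathlib

open Real Finset

/-- SINR of FU `k`. -/
noncomputable def sinr {K : ℕ} (hff : Fin K → Fin K → ℝ) (h0f N : Fin K → ℝ)
    (p0 : ℝ) (k : Fin K) (p : Fin K → ℝ) : ℝ :=
  hff k k * p k / (N k + h0f k * p0 + ∑ j ∈ Finset.univ.erase k, hff j k * p j)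

/-- Net payoff of FU `k`. -/
noncomputable def payoff {K : ℕ} (W pa p0 : ℝ) (hff : Fin K → Fin K → ℝ)
    (h0f hf0 N lam : Fin K → ℝ) (k : Fin K) (p : Fin K → ℝ) : ℝ :=
  W * Real.log (1 + sinr hff h0f N p0 k p) / (p k + pa) - lam k * hf0 k * p k

/-- One-dimensional payoff function. -/
noncomputable def fAux (W pa c L x : ℝ) : ℝ := W * Real.log (1 + c * x) / (x + pa) - L * x

/-- `ψ(x) = f'(x) · (x+pa)²`. -/
noncomputable def psiAux (W pa c L x : ℝ) : ℝ :=
  W * (c * (x + pa) / (1 + c * x) - Real.log (1 + c * x)) - L * (x + pa) ^ 2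

lemma one_add_pos {c x : ℝ} (hc : 0 < c) (hx : 0 ≤ x) : 0 < 1 + c * x := by nlinarith

lemma hasDerivAt_fAux (W pa c L : ℝ) (hpa : 0 < pa) (hc : 0 < c) {x : ℝ} (hx : 0 ≤ x) :
    HasDerivAt (fAux W pa c L) (psiAux W pa c L x / (x + pa) ^ 2) x := by
  have h1pos : 0 < 1 + c * x := one_add_pos hc hx
  have hxa : 0 < x + pa := by linarith
  have h1 : HasDerivAt (fun t : ℝ => 1 + c * t) c x := by
    simpa using ((hasDerivAt_id x).const_mul c).const_add 1
  have hlog : HasDerivAt (fun t : ℝ => Real.log (1 + c * t)) (c / (1 + c * x)) x :=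
    h1.log (ne_of_gt h1pos)
  have hnum : HasDerivAt (fun t : ℝ => W * Real.log (1 + c * t)) (W * (c / (1 + c * x))) x :=
    hlog.const_mul W
  have hden : HasDerivAt (fun t : ℝ => t + pa) 1 x := (hasDerivAt_id x).add_const pa
  have hdiv := hnum.div hden (ne_of_gt hxa)
  have hlin : HasDerivAt (fun t : ℝ => L * t) L x := by
    simpa using (hasDerivAt_id x).const_mul L
  have := hdiv.sub hlin
  have hne1 : 1 + c * x ≠ 0 := ne_of_gt h1pos
  have hne2 : x + pa ≠ 0 := ne_of_gt hxa
  refine this.congr_deriv ?_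
  unfold psiAux
  field_simp

lemma hasDerivAt_psiAux (W pa c L : ℝ) (hpa : 0 < pa) (hc : 0 < c) {x : ℝ} (hx : 0 ≤ x) :
    HasDerivAt (psiAux W pa c L)
      (-(W * c ^ 2 * (x + pa) / (1 + c * x) ^ 2) - 2 * L * (x + pa)) x := by
  have h1pos : 0 < 1 + c * x := one_add_pos hc hx
  have hxa : 0 < x + pa := by linarith
  have h1 : HasDerivAt (fun t : ℝ => 1 + c * t) c x := by
    simpa using ((hasDerivAt_id x).const_mul c).const_add 1
  have hden : HasDerivAt (fun t : ℝ => t + pa) 1 x := (hasDerivAt_id x).add_const pa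
  have hnum : HasDerivAt (fun t : ℝ => c * (t + pa)) c x := by
    simpa using hden.const_mul c
  have hdiv := hnum.div h1 (ne_of_gt h1pos)
  have hlog : HasDerivAt (fun t : ℝ => Real.log (1 + c * t)) (c / (1 + c * x)) x :=
    h1.log (ne_of_gt h1pos)
  have hsq : HasDerivAt (fun t : ℝ => L * (t + pa) ^ 2) (L * (2 * (x + pa))) x := by
    have := (hden.pow 2).const_mul L
    simpa using this
  have := ((hdiv.sub hlog).const_mul W).sub hsq
  have hne1 : 1 + c * x ≠ 0 := ne_of_gt h1pos
  refine this.congr_deriv ?_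
  field_simp
  ring

lemma psiAux_strictAntiOn (W pa c L : ℝ) (hW : 0 < W) (hpa : 0 < pa) (hc : 0 < c)
    (hL : 0 ≤ L) : StrictAntiOn (psiAux W pa c L) (Set.Ici 0) := by
  apply strictAntiOn_of_deriv_neg (convex_Ici 0)
  · exact fun x hx => (hasDerivAt_psiAux W pa c L hpa hc hx).continuousAt.continuousWithinAt
  · intro x hx
    rw [interior_Ici] at hx
    have hx0 : (0:ℝ) ≤ x := le_of_lt hx
    rw [(hasDerivAt_psiAux W pa c L hpa hc hx0).deriv]
    have h1pos : 0 < 1 + c * x := one_add_pos hc hx0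
    have hxa : 0 < x + pa := by linarith
    have h1 : 0 < W * c ^ 2 * (x + pa) / (1 + c * x) ^ 2 := by positivity
    have h2 : 0 ≤ 2 * L * (x + pa) := by positivity
    linarith

/-- On `[0,∞)`, `fAux` cannot have two distinct maximizers over a subinterval. -/
lemma fAux_unique_max (W pa c L : ℝ) (hW : 0 < W) (hpa : 0 < pa) (hc : 0 < c) (hL : 0 ≤ L)
    {x y : ℝ} (hx0 : 0 ≤ x) (hxy : x < y)
    (hmx : fAux W pa c L ((x + y) / 2) ≤ fAux W pa c L x)
    (hmy : fAux W pa c L ((x + y) / 2) ≤ fAux W pa c L y) : False := by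
  set m := (x + y) / 2 with hm
  have hxm : x < m := by simp only [hm]; linarith
  have hmy' : m < y := by simp only [hm]; linarith
  have hm0 : 0 ≤ m := le_trans hx0 (le_of_lt hxm)
  have hcont : ContinuousOn (fAux W pa c L) (Set.Ici 0) := fun t ht =>
    (hasDerivAt_fAux W pa c L hpa hc ht).continuousAt.continuousWithinAt
  -- MVT on [x, m]
  obtain ⟨a, ha, hda⟩ := exists_hasDerivAt_eq_slope (fAux W pa c L)
    (fun t => psiAux W pa c L t / (t + pa) ^ 2) hxm
    (hcont.mono (Set.Icc_subset_Ici_iff (le_of_lt hxm) |>.2 hx0))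
    (fun t ht => hasDerivAt_fAux W pa c L hpa hc (le_trans hx0 (le_of_lt ht.1)))
  -- MVT on [m, y]
  obtain ⟨b, hb, hdb⟩ := exists_hasDerivAt_eq_slope (fAux W pa c L)
    (fun t => psiAux W pa c L t / (t + pa) ^ 2) hmy'
    (hcont.mono (Set.Icc_subset_Ici_iff (le_of_lt hmy') |>.2 hm0))
    (fun t ht => hasDerivAt_fAux W pa c L hpa hc (le_trans hm0 (le_of_lt ht.1)))
  have ha0 : 0 ≤ a := le_trans hx0 (le_of_lt ha.1)
  have hb0 : 0 ≤ b := le_trans hm0 (le_of_lt hb.1)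
  have hapa : 0 < (a + pa) ^ 2 := by positivity
  have hbpa : 0 < (b + pa) ^ 2 := by positivity
  -- slope on [x, m] is ≤ 0
  have hsa : psiAux W pa c L a / (a + pa) ^ 2 ≤ 0 := by
    rw [hda]
    apply div_nonpos_of_nonpos_of_nonneg <;> [linarith; linarith]
  -- slope on [m, y] is ≥ 0
  have hsb : 0 ≤ psiAux W pa c L b / (b + pa) ^ 2 := by
    rw [hdb]
    apply div_nonneg <;> linarith
  have hpa' : psiAux W pa c L a ≤ 0 := by
    by_contra h
    push_neg at h
    have : 0 < psiAux W pa c L a / (a + pa) ^ 2 := div_pos h hapa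
    linarith
  have hpb' : 0 ≤ psiAux W pa c L b := by
    by_contra h
    push_neg at h
    have : psiAux W pa c L b / (b + pa) ^ 2 < 0 := div_neg_of_neg_of_pos h hbpa
    linarith
  have hab : a < b := lt_trans ha.2 hb.1
  have := psiAux_strictAntiOn W pa c L hW hpa hc hL ha0 hb0 hab
  linarith

/-- Lemma 1 (part): the best response of FU `k` exists and is unique: the set of
maximizers of `p_k ↦ u_k(p_k, p_{-k})` over `[0, p_k^max]` is a singleton. -/
theorem bestResponse_exists_unique {K : ℕ} (hK : 1 ≤ K)
    (W pa p0 : ℝ) (hW : 0 < W) (hpa : 0 < pa) (hp0 : 0 ≤ p0)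
    (hff : Fin K → Fin K → ℝ) (h0f hf0 N lam pmax : Fin K → ℝ)
    (hhff : ∀ i j, 0 < hff i j) (hh0f : ∀ i, 0 < h0f i) (hhf0 : ∀ i, 0 < hf0 i)
    (hN : ∀ i, 0 < N i) (hlam : ∀ i, 0 ≤ lam i) (hpmax : ∀ i, 0 < pmax i)
    (k : Fin K) (p : Fin K → ℝ) (hp : ∀ i, i ≠ k → 0 ≤ p i) :
    ∃! x : ℝ, x ∈ Set.Icc (0:ℝ) (pmax k) ∧
      ∀ y ∈ Set.Icc (0:ℝ) (pmax k),
        payoff W pa p0 hff h0f hf0 N lam k (Function.update p k y) ≤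
          payoff W pa p0 hff h0f hf0 N lam k (Function.update p k x) := by
  set D : ℝ := N k + h0f k * p0 + ∑ j ∈ Finset.univ.erase k, hff j k * p j with hD
  have hDpos : 0 < D := by
    have hsum : 0 ≤ ∑ j ∈ Finset.univ.erase k, hff j k * p j :=
      Finset.sum_nonneg fun j hj =>
        mul_nonneg (le_of_lt (hhff j k)) (hp j (Finset.ne_of_mem_erase hj))
    have := hN k
    have := mul_nonneg (le_of_lt (hh0f k)) hp0
    rw [hD]; linarith
  set c : ℝ := hff k k / D with hc
  have hcpos : 0 < c := div_pos (hhff k k) hDpos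
  set L : ℝ := lam k * hf0 k with hL
  have hLnn : 0 ≤ L := mul_nonneg (hlam k) (le_of_lt (hhf0 k))
  -- payoff along the k-th coordinate equals fAux
  have hpay : ∀ y : ℝ, payoff W pa p0 hff h0f hf0 N lam k (Function.update p k y)
      = fAux W pa c L y := by
    intro y
    unfold payoff sinr fAux
    have hsum : ∑ j ∈ Finset.univ.erase k, hff j k * Function.update p k y j
        = ∑ j ∈ Finset.univ.erase k, hff j k * p j :=
      Finset.sum_congr rfl fun j hj => by
        rw [Function.update_of_ne (Finset.ne_of_mem_erase hj)]
    rw [Function.update_self, hsum]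
    have : hff k k * y / (N k + h0f k * p0 + ∑ j ∈ Finset.univ.erase k, hff j k * p j)
        = c * y := by
      rw [hc, hD]; ring
    rw [this, hL]
  simp only [hpay]
  -- existence
  have hIcc : Set.Icc (0:ℝ) (pmax k) ⊆ Set.Ici 0 := fun t ht => ht.1
  have hcont : ContinuousOn (fAux W pa c L) (Set.Ici 0) := fun t ht =>
    (hasDerivAt_fAux W pa c L hpa hcpos ht).continuousAt.continuousWithinAt
  obtain ⟨x, hxmem, hxmax⟩ := isCompact_Icc.exists_isMaxOn
    (Set.nonempty_Icc.2 (le_of_lt (hpmax k))) (hcont.mono hIcc)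
  refine ⟨x, ⟨hxmem, fun y hy => hxmax hy⟩, ?_⟩
  rintro z ⟨hzmem, hzmax⟩
  by_contra hne
  rcases lt_or_gt_of_ne hne with h | h
  · -- z < x
    have hmmem : (z + x) / 2 ∈ Set.Icc (0:ℝ) (pmax k) :=
      ⟨by linarith [hzmem.1, hxmem.1], by linarith [hzmem.2, hxmem.2]⟩
    exact fAux_unique_max W pa c L hW hpa hcpos hLnn hzmem.1 h
      (hzmax _ hmmem) (hxmax hmmem)
  · -- x < z
    have hmmem : (x + z) / 2 ∈ Set.Icc (0:ℝ) (pmax k) :=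
      ⟨by linarith [hzmem.1, hxmem.1], by linarith [hzmem.2, hxmem.2]⟩
    exact fAux_unique_max W pa c L hW hpa hcpos hLnn hxmem.1 h
      (hxmax hmmem) (hzmax _ hmmem)
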